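/- Let n, m ≥ 1, ε > 0, S : Fin n → Fin m → ℝ, and let μ1 : Fin n → ℝ and μ2 : Fin m → ℝ have strictly positive entries with ∑_i μ1_i = ∑_j μ2_j = 1. Consider the entropic optimal transport objective F(Q) = ∑_{i,j} Q_{ij} * S_{ij} + ε * H(Q) over the compact convex set of couplings of μ1 and μ2, where H(Q) = −∑_{i,j} Q_{ij} * log Q_{ij} with 0 * log 0 = 0. Then F attains its maximum at a unique coupling Q*, this Q* has strictly positive entries, and there exist strictly positive vectors κ1 : Fin n → ℝ and κ2 : Fin m → ℝ such that Q*_{ij} = κ1_i * exp(S_{ij} / ε) * κ2_j for all i, j. -/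

import Mathlib

/-- A coupling of positive marginal vectors `μ1 : Fin n → ℝ` and `μ2 : Fin m → ℝ`:
a matrix with nonnegative entries whose row sums equal `μ1` and column sums equal `μ2`. -/
def IsCoupling {n m : ℕ} (μ1 : Fin n → ℝ) (μ2 : Fin m → ℝ)
    (Q : Fin n → Fin m → ℝ) : Prop :=
  (∀ i j, 0 ≤ Q i j) ∧ (∀ i, ∑ j, Q i j = μ1 i) ∧ (∀ j, ∑ i, Q i j = μ2 j)

/-- The entropic optimal transport objective
`F(Q) = ∑ i j, Q i j * S i j + ε * H(Q)` with `H(Q) = -∑ i j, Q i j * log (Q i j)`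
(convention `0 * log 0 = 0`). -/
noncomputable def entropicOTObjective {n m : ℕ} (ε : ℝ)
    (S : Fin n → Fin m → ℝ) (Q : Fin n → Fin m → ℝ) : ℝ :=
  (∑ i, ∑ j, Q i j * S i j) + ε * (-∑ i, ∑ j, Q i j * Real.log (Q i j))

open Real Finset

lemma exists_max {n m : ℕ} (ε : ℝ) (S : Fin n → Fin m → ℝ)
    (μ1 : Fin n → ℝ) (hμ1 : ∀ i, 0 < μ1 i) (hμ1sum : ∑ i, μ1 i = 1)
    (μ2 : Fin m → ℝ) (hμ2 : ∀ j, 0 < μ2 j) (hμ2sum : ∑ j, μ2 j = 1) :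
    ∃ Q, IsCoupling μ1 μ2 Q ∧
      ∀ Q', IsCoupling μ1 μ2 Q' →
        entropicOTObjective ε S Q' ≤ entropicOTObjective ε S Q := by
  set C : Set (Fin n → Fin m → ℝ) := {Q | IsCoupling μ1 μ2 Q} with hC
  have hne : C.Nonempty := by
    refine ⟨fun i j => μ1 i * μ2 j, ⟨fun i j => mul_nonneg (hμ1 i).le (hμ2 j).le, ?_, ?_⟩⟩
    · intro i; rw [← Finset.mul_sum, hμ2sum, mul_one]
    · intro j; rw [← Finset.sum_mul, hμ1sum, one_mul]
  have happly : ∀ (i : Fin n) (j : Fin m),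
      Continuous (fun Q : Fin n → Fin m → ℝ => Q i j) :=
    fun i j => (continuous_apply j).comp (continuous_apply i)
  have hclosed : IsClosed C := by
    have h1 : IsClosed {Q : Fin n → Fin m → ℝ | ∀ i j, 0 ≤ Q i j} := by
      simp only [Set.setOf_forall]
      refine isClosed_iInter fun i => isClosed_iInter fun j => ?_
      exact isClosed_le continuous_const (happly i j)
    have h2 : IsClosed {Q : Fin n → Fin m → ℝ | ∀ i, ∑ j, Q i j = μ1 i} := by
      simp only [Set.setOf_forall]
      refine isClosed_iInter fun i => ?_
      exact isClosed_eq (continuous_finset_sum _ fun j _ => happly i j) continuous_const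
    have h3 : IsClosed {Q : Fin n → Fin m → ℝ | ∀ j, ∑ i, Q i j = μ2 j} := by
      simp only [Set.setOf_forall]
      refine isClosed_iInter fun j => ?_
      exact isClosed_eq (continuous_finset_sum _ fun i _ => happly i j) continuous_const
    have : C = {Q : Fin n → Fin m → ℝ | ∀ i j, 0 ≤ Q i j}
        ∩ ({Q | ∀ i, ∑ j, Q i j = μ1 i} ∩ {Q | ∀ j, ∑ i, Q i j = μ2 j}) := by
      ext Q; simp [hC, IsCoupling, Set.mem_setOf_eq, Set.mem_inter_iff, and_assoc]
    rw [this]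
    exact h1.inter (h2.inter h3)
  have hsub : C ⊆ Set.Icc (fun _ _ => (0:ℝ)) (fun _ _ => (1:ℝ)) := by
    rintro Q ⟨h0, hr, _⟩
    constructor
    · intro i j; exact h0 i j
    · intro i j
      calc Q i j ≤ ∑ j', Q i j' :=
            Finset.single_le_sum (fun j' _ => h0 i j') (Finset.mem_univ j)
        _ = μ1 i := hr i
        _ ≤ ∑ i', μ1 i' :=
            Finset.single_le_sum (fun i' _ => (hμ1 i').le) (Finset.mem_univ i)
        _ = 1 := hμ1sum
  have hcomp : IsCompact C :=
    IsCompact.of_isClosed_subset (isCompact_Icc) hclosed hsub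
  have hcont : Continuous (entropicOTObjective ε S) := by
    unfold entropicOTObjective
    refine Continuous.add ?_ (continuous_const.mul (Continuous.neg ?_))
    · exact continuous_finset_sum _ fun i _ => continuous_finset_sum _ fun j _ =>
        (happly i j).mul continuous_const
    · exact continuous_finset_sum _ fun i _ => continuous_finset_sum _ fun j _ =>
        Real.continuous_mul_log.comp (happly i j)
  obtain ⟨Q, hQC, hmax⟩ := hcomp.exists_isMaxOn hne hcont.continuousOn
  exact ⟨Q, hQC, fun Q' hQ' => hmax hQ'⟩


open Real Finset

lemma nml_diff_ge {u v : ℝ} (hu : 0 < u) (hv : 0 < v) :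
    (v - u) * (-(Real.log v + 1)) ≤ Real.negMulLog v - Real.negMulLog u := by
  have h := Real.log_le_sub_one_of_pos (div_pos hv hu)
  rw [Real.log_div hv.ne' hu.ne'] at h
  have h2 : u * (Real.log v - Real.log u) ≤ u * (v / u - 1) :=
    mul_le_mul_of_nonneg_left h hu.le
  have h3 : u * (v / u - 1) = v - u := by field_simp
  simp only [Real.negMulLog]
  nlinarith [h2, h3]

lemma nml_mid_ge {x y : ℝ} (hx : 0 ≤ x) (hy : 0 ≤ y) :
    (Real.negMulLog x + Real.negMulLog y) / 2 ≤ Real.negMulLog ((x + y) / 2) := by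
  have := Real.concaveOn_negMulLog.2 (Set.mem_Ici.2 hx) (Set.mem_Ici.2 hy)
    (by norm_num : (0:ℝ) ≤ 1/2) (by norm_num : (0:ℝ) ≤ 1/2) (by norm_num)
  simp only [smul_eq_mul] at this
  calc (Real.negMulLog x + Real.negMulLog y) / 2
      = 1/2 * Real.negMulLog x + 1/2 * Real.negMulLog y := by ring
    _ ≤ Real.negMulLog (1/2 * x + 1/2 * y) := this
    _ = Real.negMulLog ((x + y)/2) := by ring_nf

lemma nml_mid_gt {x y : ℝ} (hx : 0 ≤ x) (hy : 0 ≤ y) (hxy : x ≠ y) :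
    (Real.negMulLog x + Real.negMulLog y) / 2 < Real.negMulLog ((x + y) / 2) := by
  have := Real.strictConcaveOn_negMulLog.2 (Set.mem_Ici.2 hx) (Set.mem_Ici.2 hy) hxy
    (by norm_num : (0:ℝ) < 1/2) (by norm_num : (0:ℝ) < 1/2) (by norm_num)
  simp only [smul_eq_mul] at this
  calc (Real.negMulLog x + Real.negMulLog y) / 2
      = 1/2 * Real.negMulLog x + 1/2 * Real.negMulLog y := by ring
    _ < Real.negMulLog (1/2 * x + 1/2 * y) := this
    _ = Real.negMulLog ((x + y)/2) := by ring_nf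

lemma nml_add_ge {c t : ℝ} (hc : 0 ≤ c) (ht : 0 < t) (ht1 : t ≤ 1) :
    -t * (Real.log (c + 1) + 1) ≤ Real.negMulLog (c + t) - Real.negMulLog c := by
  rcases eq_or_lt_of_le hc with h | h
  · subst h
    have hlt : Real.log t ≤ 0 := Real.log_nonpos ht.le ht1
    simp only [zero_add, Real.negMulLog_zero, Real.log_one, Real.negMulLog, sub_zero]
    nlinarith
  · have h1 := nml_diff_ge h (by linarith : (0:ℝ) < c + t)
    have h2 : Real.log (c + t) ≤ Real.log (c + 1) :=
      Real.log_le_log (by linarith) (by linarith)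
    nlinarith [h1, h2]

lemma nml_sub_ge {a t : ℝ} (ha : 0 < a) (ht : 0 < t) (hta : t ≤ a / 2) :
    t * (Real.log (a / 2) + 1) ≤ Real.negMulLog (a - t) - Real.negMulLog a := by
  have hat : 0 < a - t := by linarith
  have h1 := nml_diff_ge ha hat
  have h2 : Real.log (a / 2) ≤ Real.log (a - t) :=
    Real.log_le_log (by linarith) (by linarith)
  nlinarith [h1, h2]


open Real Finset

noncomputable def gdir {n m : ℕ} (i0 i1 : Fin n) (j0 j1 : Fin m) : Fin n → Fin m → ℝ :=
  fun a b =>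
    (if a = i0 then (1:ℝ) else 0) * (if b = j0 then 1 else 0)
    + (if a = i1 then 1 else 0) * (if b = j1 then 1 else 0)
    - (if a = i0 then 1 else 0) * (if b = j1 then 1 else 0)
    - (if a = i1 then 1 else 0) * (if b = j0 then 1 else 0)

variable {n m : ℕ} {i0 i1 : Fin n} {j0 j1 : Fin m}

lemma gdir_row_sum (a : Fin n) : ∑ b, gdir i0 i1 j0 j1 a b = 0 := by
  simp [gdir, Finset.sum_add_distrib, Finset.sum_sub_distrib, ← Finset.mul_sum]

lemma gdir_col_sum (b : Fin m) : ∑ a, gdir i0 i1 j0 j1 a b = 0 := by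
  simp [gdir, Finset.sum_add_distrib, Finset.sum_sub_distrib, ← Finset.sum_mul]

lemma sum_gdir_mul (c : Fin n → Fin m → ℝ) :
    ∑ a, ∑ b, gdir i0 i1 j0 j1 a b * c a b
      = c i0 j0 + c i1 j1 - c i0 j1 - c i1 j0 := by
  simp [gdir, add_mul, sub_mul, Finset.sum_add_distrib, Finset.sum_sub_distrib,
    mul_assoc, ite_mul, Finset.sum_ite_eq']

lemma gdir_ne_row {a : Fin n} (ha0 : a ≠ i0) (ha1 : a ≠ i1) (b : Fin m) :
    gdir i0 i1 j0 j1 a b = 0 := by simp [gdir, ha0, ha1]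

lemma gdir_ne_col {b : Fin m} (a : Fin n) (hb0 : b ≠ j0) (hb1 : b ≠ j1) :
    gdir i0 i1 j0 j1 a b = 0 := by simp [gdir, hb0, hb1]

lemma gdir_00 (hi : i0 ≠ i1) (hj : j0 ≠ j1) : gdir i0 i1 j0 j1 i0 j0 = 1 := by
  simp [gdir, hi, hj, hi.symm, hj.symm]

lemma gdir_11 (hi : i0 ≠ i1) (hj : j0 ≠ j1) : gdir i0 i1 j0 j1 i1 j1 = 1 := by
  simp [gdir, hi, hj, hi.symm, hj.symm]

lemma gdir_01 (hi : i0 ≠ i1) (hj : j0 ≠ j1) : gdir i0 i1 j0 j1 i0 j1 = -1 := by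
  simp [gdir, hi, hj, hi.symm, hj.symm]

lemma gdir_10 (hi : i0 ≠ i1) (hj : j0 ≠ j1) : gdir i0 i1 j0 j1 i1 j0 = -1 := by
  simp [gdir, hi, hj, hi.symm, hj.symm]

lemma sum_four {g : Fin n → Fin m → ℝ} (hi : i0 ≠ i1) (hj : j0 ≠ j1)
    (h0 : ∀ a b, a ≠ i0 → a ≠ i1 → g a b = 0)
    (h1 : ∀ a b, b ≠ j0 → b ≠ j1 → g a b = 0) :
    ∑ a, ∑ b, g a b = g i0 j0 + g i0 j1 + g i1 j0 + g i1 j1 := by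
  have inner : ∀ a, ∑ b, g a b = g a j0 + g a j1 := by
    intro a
    rw [← Finset.sum_subset (Finset.subset_univ ({j0, j1} : Finset (Fin m)))
      (fun b _ hb => h1 a b (fun h => hb (by simp [h])) (fun h => hb (by simp [h])))]
    rw [Finset.sum_pair hj]
  calc ∑ a, ∑ b, g a b = ∑ a ∈ ({i0, i1} : Finset (Fin n)), ∑ b, g a b := by
        rw [← Finset.sum_subset (Finset.subset_univ ({i0, i1} : Finset (Fin n)))
          (fun a _ ha => by
            rw [Finset.sum_eq_zero]
            intro b _
            exact h0 a b (fun h => ha (by simp [h])) (fun h => ha (by simp [h])))]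
    _ = g i0 j0 + g i0 j1 + g i1 j0 + g i1 j1 := by
        rw [Finset.sum_pair hi, inner, inner]; ring

lemma F_eq {n m : ℕ} (ε : ℝ) (S R : Fin n → Fin m → ℝ) :
    (∑ i, ∑ j, R i j * S i j) + ε * (-∑ i, ∑ j, R i j * Real.log (R i j))
      = ∑ a, ∑ b, (R a b * S a b + ε * Real.negMulLog (R a b)) := by
  simp only [Finset.sum_add_distrib, Real.negMulLog, neg_mul, mul_neg, ← Finset.mul_sum,
    Finset.sum_neg_distrib]

lemma pos_combo {ε ΔS K t : ℝ} (hε : 0 < ε) (ht0 : 0 < t)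
    (hlog : Real.log t ≤ (ΔS + ε * K) / ε - 1) :
    0 < t * (ΔS + ε * K - ε * Real.log t) := by
  have h1 : ε * Real.log t ≤ ε * ((ΔS + ε * K) / ε - 1) :=
    mul_le_mul_of_nonneg_left hlog hε.le
  have h2 : ε * ((ΔS + ε * K) / ε - 1) = ΔS + ε * K - ε := by field_simp
  apply mul_pos ht0
  nlinarith

-- positivity of the maximizer
lemma max_pos {n m : ℕ} {ε : ℝ} (hε : 0 < ε) (S : Fin n → Fin m → ℝ)
    {μ1 : Fin n → ℝ} (hμ1 : ∀ i, 0 < μ1 i)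
    {μ2 : Fin m → ℝ} (hμ2 : ∀ j, 0 < μ2 j)
    {Q : Fin n → Fin m → ℝ} (hQ : IsCoupling μ1 μ2 Q)
    (hmax : ∀ Q', IsCoupling μ1 μ2 Q' →
      entropicOTObjective ε S Q' ≤ entropicOTObjective ε S Q) :
    ∀ i j, 0 < Q i j := by
  by_contra hcon
  push_neg at hcon
  obtain ⟨i0, j0, h00⟩ := hcon
  have h00 : Q i0 j0 = 0 := le_antisymm h00 (hQ.1 i0 j0)
  have hj1 : ∃ j1, 0 < Q i0 j1 := by
    by_contra h; push_neg at h
    have hz : ∑ j, Q i0 j = 0 :=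
      Finset.sum_eq_zero fun j _ => le_antisymm (h j) (hQ.1 i0 j)
    rw [hQ.2.1 i0] at hz
    exact (hμ1 i0).ne' hz
  obtain ⟨j1, hj1⟩ := hj1
  have hi1 : ∃ i1, 0 < Q i1 j0 := by
    by_contra h; push_neg at h
    have hz : ∑ i, Q i j0 = 0 :=
      Finset.sum_eq_zero fun i _ => le_antisymm (h i) (hQ.1 i j0)
    rw [hQ.2.2 j0] at hz
    exact (hμ2 j0).ne' hz
  obtain ⟨i1, hi1⟩ := hi1
  have hi : i0 ≠ i1 := by rintro rfl; rw [h00] at hi1; exact lt_irrefl _ hi1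
  have hj : j0 ≠ j1 := by rintro rfl; rw [h00] at hj1; exact lt_irrefl _ hj1
  obtain ⟨a, ha⟩ : ∃ a, a = Q i0 j1 := ⟨_, rfl⟩
  obtain ⟨b, hb⟩ : ∃ b, b = Q i1 j0 := ⟨_, rfl⟩
  obtain ⟨c, hc⟩ : ∃ c, c = Q i1 j1 := ⟨_, rfl⟩
  have hapos : 0 < a := ha ▸ hj1
  have hbpos : 0 < b := hb ▸ hi1
  have hcnn : 0 ≤ c := hc ▸ hQ.1 i1 j1
  obtain ⟨ΔS, hΔS⟩ : ∃ d, d = S i0 j0 + S i1 j1 - S i0 j1 - S i1 j0 := ⟨_, rfl⟩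
  obtain ⟨K, hK⟩ : ∃ k, k = -(Real.log (c + 1) + 1) + (Real.log (a / 2) + 1)
      + (Real.log (b / 2) + 1) := ⟨_, rfl⟩
  obtain ⟨t, ht0, hta, htb, ht1, htlog⟩ : ∃ t : ℝ, 0 < t ∧ t ≤ a / 2 ∧ t ≤ b / 2 ∧ t ≤ 1
      ∧ Real.log t ≤ (ΔS + ε * K) / ε - 1 := by
    refine ⟨min (Real.exp ((ΔS + ε * K) / ε - 1)) (min (a / 2) (min (b / 2) 1)),
      lt_min (Real.exp_pos _) (lt_min (by linarith) (lt_min (by linarith) one_pos)),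
      le_trans (min_le_right _ _) (min_le_left _ _),
      le_trans (min_le_right _ _) (le_trans (min_le_right _ _) (min_le_left _ _)),
      le_trans (min_le_right _ _) (le_trans (min_le_right _ _) (min_le_right _ _)), ?_⟩
    calc Real.log _ ≤ Real.log (Real.exp ((ΔS + ε * K) / ε - 1)) :=
          Real.log_le_log (lt_min (Real.exp_pos _)
            (lt_min (by linarith) (lt_min (by linarith) one_pos))) (min_le_left _ _)
      _ = (ΔS + ε * K) / ε - 1 := Real.log_exp _
  obtain ⟨Qt, hQt⟩ : ∃ R : Fin n → Fin m → ℝ,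
      R = fun x y => Q x y + t * gdir i0 i1 j0 j1 x y := ⟨_, rfl⟩
  have hQt00 : Qt i0 j0 = t := by
    simp only [hQt]; rw [gdir_00 hi hj, h00]; ring
  have hQt01 : Qt i0 j1 = a - t := by
    simp only [hQt]; rw [gdir_01 hi hj, ← ha]; ring
  have hQt10 : Qt i1 j0 = b - t := by
    simp only [hQt]; rw [gdir_10 hi hj, ← hb]; ring
  have hQt11 : Qt i1 j1 = c + t := by
    simp only [hQt]; rw [gdir_11 hi hj, ← hc]; ring
  have hQtc : IsCoupling μ1 μ2 Qt := by
    refine ⟨?_, ?_, ?_⟩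
    · intro x y
      by_cases hx0 : x = i0
      · by_cases hy0 : y = j0
        · rw [hx0, hy0, hQt00]; exact ht0.le
        · by_cases hy1 : y = j1
          · rw [hx0, hy1, hQt01]; linarith
          · have hz : gdir i0 i1 j0 j1 x y = 0 := gdir_ne_col x hy0 hy1
            simp only [hQt]; rw [hz, mul_zero, add_zero]; exact hQ.1 x y
      · by_cases hx1 : x = i1
        · by_cases hy0 : y = j0
          · rw [hx1, hy0, hQt10]; linarith
          · by_cases hy1 : y = j1
            · rw [hx1, hy1, hQt11]; linarith
            · have hz : gdir i0 i1 j0 j1 x y = 0 := gdir_ne_col x hy0 hy1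
              simp only [hQt]; rw [hz, mul_zero, add_zero]; exact hQ.1 x y
        · have hz : gdir i0 i1 j0 j1 x y = 0 := gdir_ne_row hx0 hx1 y
          simp only [hQt]; rw [hz, mul_zero, add_zero]; exact hQ.1 x y
    · intro x
      simp only [hQt, Finset.sum_add_distrib, ← Finset.mul_sum, gdir_row_sum,
        mul_zero, add_zero]
      exact hQ.2.1 x
    · intro y
      simp only [hQt, Finset.sum_add_distrib, ← Finset.mul_sum, gdir_col_sum,
        mul_zero, add_zero]
      exact hQ.2.2 y
  obtain ⟨g, hg⟩ : ∃ g : Fin n → Fin m → ℝ, g = fun x y =>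
      (Qt x y * S x y + ε * Real.negMulLog (Qt x y))
        - (Q x y * S x y + ε * Real.negMulLog (Q x y)) := ⟨_, rfl⟩
  have hdiff : entropicOTObjective ε S Qt - entropicOTObjective ε S Q
      = ∑ x, ∑ y, g x y := by
    unfold entropicOTObjective
    rw [F_eq ε S Qt, F_eq ε S Q, ← Finset.sum_sub_distrib]
    refine Finset.sum_congr rfl fun x _ => ?_
    rw [← Finset.sum_sub_distrib]
    exact Finset.sum_congr rfl fun y _ => by rw [hg]
  have hzero : ∀ x y, gdir i0 i1 j0 j1 x y = 0 → g x y = 0 := by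
    intro x y h
    have hQR : Qt x y = Q x y := by simp only [hQt]; rw [h, mul_zero, add_zero]
    rw [hg]; simp only [hQR]; ring
  have hfour : ∑ x, ∑ y, g x y = g i0 j0 + g i0 j1 + g i1 j0 + g i1 j1 := by
    refine sum_four hi hj ?_ ?_
    · intro x y hx0 hx1; exact hzero x y (gdir_ne_row hx0 hx1 y)
    · intro x y hy0 hy1; exact hzero x y (gdir_ne_col x hy0 hy1)
  have hg00 : g i0 j0 = t * S i0 j0 + ε * Real.negMulLog t := by
    rw [hg]; simp only [hQt00, h00, Real.negMulLog_zero]; ring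
  have hg01 : g i0 j1 = -t * S i0 j1
      + ε * (Real.negMulLog (a - t) - Real.negMulLog a) := by
    rw [hg]; simp only [hQt01, ← ha]; ring
  have hg10 : g i1 j0 = -t * S i1 j0
      + ε * (Real.negMulLog (b - t) - Real.negMulLog b) := by
    rw [hg]; simp only [hQt10, ← hb]; ring
  have hg11 : g i1 j1 = t * S i1 j1
      + ε * (Real.negMulLog (c + t) - Real.negMulLog c) := by
    rw [hg]; simp only [hQt11, ← hc]; ring
  have hbound : t * (ΔS + ε * K - ε * Real.log t)
      ≤ entropicOTObjective ε S Qt - entropicOTObjective ε S Q := by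
    rw [hdiff, hfour, hg00, hg01, hg10, hg11]
    have e1 : -t * (Real.log (c + 1) + 1)
        ≤ Real.negMulLog (c + t) - Real.negMulLog c := nml_add_ge hcnn ht0 ht1
    have e2 : t * (Real.log (a / 2) + 1)
        ≤ Real.negMulLog (a - t) - Real.negMulLog a := nml_sub_ge hapos ht0 hta
    have e3 : t * (Real.log (b / 2) + 1)
        ≤ Real.negMulLog (b - t) - Real.negMulLog b := nml_sub_ge hbpos ht0 htb
    have e4 : Real.negMulLog t = -t * Real.log t := by rw [Real.negMulLog]
    have f1 := mul_le_mul_of_nonneg_left e1 hε.le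
    have f2 := mul_le_mul_of_nonneg_left e2 hε.le
    have f3 := mul_le_mul_of_nonneg_left e3 hε.le
    rw [hΔS, hK, e4]
    nlinarith [f1, f2, f3]
  have hposd := pos_combo hε ht0 htlog
  have := hmax Qt hQtc
  linarith

lemma max_unique {n m : ℕ} {ε : ℝ} (hε : 0 < ε) (S : Fin n → Fin m → ℝ)
    {μ1 : Fin n → ℝ} {μ2 : Fin m → ℝ}
    {Q : Fin n → Fin m → ℝ} (hQ : IsCoupling μ1 μ2 Q)
    (hmax : ∀ Q', IsCoupling μ1 μ2 Q' →
      entropicOTObjective ε S Q' ≤ entropicOTObjective ε S Q) :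
    ∀ Q', IsCoupling μ1 μ2 Q' →
      entropicOTObjective ε S Q' = entropicOTObjective ε S Q → Q' = Q := by
  intro Q' hQ' heq
  by_contra hne
  obtain ⟨x0, hx0⟩ := Function.ne_iff.1 hne
  obtain ⟨y0, hy0⟩ := Function.ne_iff.1 hx0
  obtain ⟨R, hR⟩ : ∃ R : Fin n → Fin m → ℝ,
      R = fun x y => (Q' x y + Q x y) / 2 := ⟨_, rfl⟩
  have hRc : IsCoupling μ1 μ2 R := by
    refine ⟨fun x y => ?_, fun x => ?_, fun y => ?_⟩
    · simp only [hR]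
      have := hQ.1 x y; have := hQ'.1 x y; linarith
    · simp only [hR, ← Finset.sum_div, Finset.sum_add_distrib, hQ.2.1 x, hQ'.2.1 x]
      ring
    · simp only [hR, ← Finset.sum_div, Finset.sum_add_distrib, hQ.2.2 y, hQ'.2.2 y]
      ring
  have hterm_le : ∀ x y,
      ((Q' x y * S x y + ε * Real.negMulLog (Q' x y))
        + (Q x y * S x y + ε * Real.negMulLog (Q x y))) / 2
      ≤ R x y * S x y + ε * Real.negMulLog (R x y) := by
    intro x y
    have h := nml_mid_ge (hQ'.1 x y) (hQ.1 x y)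
    have h2 := mul_le_mul_of_nonneg_left h hε.le
    simp only [hR]
    nlinarith [h2]
  have hterm_lt :
      ((Q' x0 y0 * S x0 y0 + ε * Real.negMulLog (Q' x0 y0))
        + (Q x0 y0 * S x0 y0 + ε * Real.negMulLog (Q x0 y0))) / 2
      < R x0 y0 * S x0 y0 + ε * Real.negMulLog (R x0 y0) := by
    have h := nml_mid_gt (hQ'.1 x0 y0) (hQ.1 x0 y0) hy0
    have h2 := mul_lt_mul_of_pos_left h hε
    simp only [hR]
    nlinarith [h2]
  have hkey : (entropicOTObjective ε S Q' + entropicOTObjective ε S Q) / 2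
      < entropicOTObjective ε S R := by
    unfold entropicOTObjective
    rw [F_eq ε S Q', F_eq ε S Q, F_eq ε S R]
    calc (∑ x, ∑ y, (Q' x y * S x y + ε * Real.negMulLog (Q' x y))
          + ∑ x, ∑ y, (Q x y * S x y + ε * Real.negMulLog (Q x y))) / 2
        = ∑ x, ∑ y, (((Q' x y * S x y + ε * Real.negMulLog (Q' x y))
            + (Q x y * S x y + ε * Real.negMulLog (Q x y))) / 2) := by
          simp only [← Finset.sum_add_distrib, Finset.sum_div]
      _ < ∑ x, ∑ y, (R x y * S x y + ε * Real.negMulLog (R x y)) := by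
          refine Finset.sum_lt_sum (fun x _ => Finset.sum_le_sum
            (fun y _ => hterm_le x y)) ⟨x0, Finset.mem_univ _, ?_⟩
          exact Finset.sum_lt_sum (fun y _ => hterm_le x0 y)
            ⟨y0, Finset.mem_univ _, hterm_lt⟩
  have h1 := hmax R hRc
  rw [heq] at hkey
  have : entropicOTObjective ε S Q < entropicOTObjective ε S R := by linarith
  linarith

lemma stationary {n m : ℕ} {ε : ℝ} (hε : 0 < ε) (S : Fin n → Fin m → ℝ)
    {μ1 : Fin n → ℝ} {μ2 : Fin m → ℝ}
    {Q : Fin n → Fin m → ℝ} (hQ : IsCoupling μ1 μ2 Q) (hpos : ∀ i j, 0 < Q i j)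
    (hmax : ∀ Q', IsCoupling μ1 μ2 Q' →
      entropicOTObjective ε S Q' ≤ entropicOTObjective ε S Q)
    {i0 i1 : Fin n} {j0 j1 : Fin m} (hi : i0 ≠ i1) (hj : j0 ≠ j1) :
    (S i0 j0 - ε * Real.log (Q i0 j0)) + (S i1 j1 - ε * Real.log (Q i1 j1))
      = (S i0 j1 - ε * Real.log (Q i0 j1)) + (S i1 j0 - ε * Real.log (Q i1 j0)) := by
  obtain ⟨D, hD⟩ : ∃ D : Fin n → Fin m → ℝ, D = gdir i0 i1 j0 j1 := ⟨_, rfl⟩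
  obtain ⟨h, hh⟩ : ∃ h : ℝ → ℝ, h = fun t => ∑ x, ∑ y,
      ((Q x y + t * D x y) * S x y + ε * Real.negMulLog (Q x y + t * D x y)) := ⟨_, rfl⟩
  obtain ⟨δ, hδ0, hδ00, hδ01, hδ10, hδ11⟩ : ∃ δ : ℝ, 0 < δ ∧ δ ≤ Q i0 j0 ∧ δ ≤ Q i0 j1
      ∧ δ ≤ Q i1 j0 ∧ δ ≤ Q i1 j1 := by
    refine ⟨min (Q i0 j0) (min (Q i0 j1) (min (Q i1 j0) (Q i1 j1))),
      lt_min (hpos _ _) (lt_min (hpos _ _) (lt_min (hpos _ _) (hpos _ _))), ?_, ?_, ?_, ?_⟩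
    · exact min_le_left _ _
    · exact le_trans (min_le_right _ _) (min_le_left _ _)
    · exact le_trans (min_le_right _ _) (le_trans (min_le_right _ _) (min_le_left _ _))
    · exact le_trans (min_le_right _ _) (le_trans (min_le_right _ _) (min_le_right _ _))
  -- feasibility for |t| < δ
  have hfeas : ∀ t : ℝ, t ∈ Set.Ioo (-δ) δ →
      IsCoupling μ1 μ2 (fun x y => Q x y + t * D x y) := by
    intro t ht
    refine ⟨?_, ?_, ?_⟩
    · intro x y
      show 0 ≤ Q x y + t * D x y
      by_cases hx0 : x = i0
      · by_cases hy0 : y = j0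
        · rw [hx0, hy0, hD, gdir_00 hi hj, mul_one]
          have := ht.1; linarith
        · by_cases hy1 : y = j1
          · rw [hx0, hy1, hD, gdir_01 hi hj]
            have := ht.2; linarith
          · rw [hD, gdir_ne_col x hy0 hy1, mul_zero, add_zero]; exact hQ.1 x y
      · by_cases hx1 : x = i1
        · by_cases hy0 : y = j0
          · rw [hx1, hy0, hD, gdir_10 hi hj]
            have := ht.2; linarith
          · by_cases hy1 : y = j1
            · rw [hx1, hy1, hD, gdir_11 hi hj, mul_one]
              have := ht.1; linarith
            · rw [hD, gdir_ne_col x hy0 hy1, mul_zero, add_zero]; exact hQ.1 x y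
        · rw [hD, gdir_ne_row hx0 hx1 y, mul_zero, add_zero]; exact hQ.1 x y
    · intro x
      simp only [hD, Finset.sum_add_distrib, ← Finset.mul_sum, gdir_row_sum,
        mul_zero, add_zero]
      exact hQ.2.1 x
    · intro y
      simp only [hD, Finset.sum_add_distrib, ← Finset.mul_sum, gdir_col_sum,
        mul_zero, add_zero]
      exact hQ.2.2 y
  have hh0 : h 0 = entropicOTObjective ε S Q := by
    rw [hh]
    unfold entropicOTObjective
    rw [F_eq ε S Q]
    simp
  have hloc : IsLocalMax h 0 := by
    filter_upwards [Ioo_mem_nhds (by linarith : -δ < 0) hδ0] with t ht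
    have hF : h t = entropicOTObjective ε S (fun x y => Q x y + t * D x y) := by
      rw [hh]
      unfold entropicOTObjective
      rw [F_eq ε S (fun x y => Q x y + t * D x y)]
    rw [hF, hh0]
    exact hmax _ (hfeas t ht)
  have hterm : ∀ x y, HasDerivAt
      (fun t => (Q x y + t * D x y) * S x y + ε * Real.negMulLog (Q x y + t * D x y))
      (D x y * S x y + ε * ((-Real.log (Q x y) - 1) * D x y)) 0 := by
    intro x y
    have hlin : HasDerivAt (fun t : ℝ => Q x y + t * D x y) (D x y) 0 := by
      simpa using ((hasDerivAt_id (0:ℝ)).mul_const (D x y)).const_add (Q x y)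
    have hne : Q x y + 0 * D x y ≠ 0 := by simpa using (hpos x y).ne'
    have hg : HasDerivAt Real.negMulLog (-Real.log (Q x y) - 1) (Q x y + 0 * D x y) := by
      have := Real.hasDerivAt_negMulLog hne
      simpa using this
    have hcomp := (hg.comp 0 hlin)
    exact (hlin.mul_const (S x y)).add ((hcomp.const_mul ε))
  have hderiv : HasDerivAt h
      (∑ x, ∑ y, (D x y * S x y + ε * ((-Real.log (Q x y) - 1) * D x y))) 0 := by
    rw [hh]
    exact HasDerivAt.fun_sum fun x _ => HasDerivAt.fun_sum fun y _ => hterm x y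
  have hzero : ∑ x, ∑ y, (D x y * S x y + ε * ((-Real.log (Q x y) - 1) * D x y)) = 0 := by
    rw [← hderiv.deriv]
    exact hloc.deriv_eq_zero
  have hrw : ∑ x, ∑ y, (D x y * S x y + ε * ((-Real.log (Q x y) - 1) * D x y))
      = ∑ x, ∑ y, D x y * (S x y - ε * Real.log (Q x y) - ε) := by
    refine Finset.sum_congr rfl fun x _ => Finset.sum_congr rfl fun y _ => by ring
  rw [hrw, hD, sum_gdir_mul] at hzero
  linarith [hzero]

lemma max_factor {n m : ℕ} (hn : 1 ≤ n) (hm : 1 ≤ m) {ε : ℝ} (hε : 0 < ε)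
    (S : Fin n → Fin m → ℝ) {μ1 : Fin n → ℝ} {μ2 : Fin m → ℝ}
    {Q : Fin n → Fin m → ℝ} (hQ : IsCoupling μ1 μ2 Q) (hpos : ∀ i j, 0 < Q i j)
    (hmax : ∀ Q', IsCoupling μ1 μ2 Q' →
      entropicOTObjective ε S Q' ≤ entropicOTObjective ε S Q) :
    ∃ (κ1 : Fin n → ℝ) (κ2 : Fin m → ℝ),
      (∀ i, 0 < κ1 i) ∧ (∀ j, 0 < κ2 j) ∧
      ∀ i j, Q i j = κ1 i * Real.exp (S i j / ε) * κ2 j := by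
  obtain ⟨I0⟩ : Nonempty (Fin n) := ⟨⟨0, hn⟩⟩
  obtain ⟨J0⟩ : Nonempty (Fin m) := ⟨⟨0, hm⟩⟩
  obtain ⟨D, hD⟩ : ∃ D : Fin n → Fin m → ℝ,
      D = fun i j => Real.log (Q i j) - S i j / ε := ⟨_, rfl⟩
  have hDrel : ∀ i j, D i j = D i J0 + D I0 j - D I0 J0 := by
    intro i j
    by_cases hiI : i = I0
    · subst hiI; ring
    · by_cases hjJ : j = J0
      · subst hjJ; ring
      · have hst := stationary hε S hQ hpos hmax (i0 := i) (i1 := I0) (j0 := j)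
          (j1 := J0) hiI hjJ
        have hεne : ε ≠ 0 := hε.ne'
        simp only [hD]
        field_simp
        nlinarith [hst]
  refine ⟨fun i => Real.exp (D i J0 - D I0 J0), fun j => Real.exp (D I0 j),
    fun i => Real.exp_pos _, fun j => Real.exp_pos _, fun i j => ?_⟩
  rw [← Real.exp_add, ← Real.exp_add]
  have : D i J0 - D I0 J0 + S i j / ε + D I0 j = D i j + S i j / ε := by
    rw [hDrel i j]; ring
  rw [this, hD]
  simp only []
  rw [sub_add_cancel, Real.exp_log (hpos i j)]


/-- The entropic OT objective attains its maximum over the couplings of `μ1` and `μ2`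
at a unique coupling `Q*`; this `Q*` has strictly positive entries, and it factors
through the Gibbs kernel: `Q* i j = κ1 i * exp (S i j / ε) * κ2 j` for some strictly
positive vectors `κ1, κ2`. -/
theorem entropic_ot_unique_maximizer (n m : ℕ) (hn : 1 ≤ n) (hm : 1 ≤ m)
    (ε : ℝ) (hε : 0 < ε) (S : Fin n → Fin m → ℝ)
    (μ1 : Fin n → ℝ) (hμ1 : ∀ i, 0 < μ1 i) (hμ1sum : ∑ i, μ1 i = 1)
    (μ2 : Fin m → ℝ) (hμ2 : ∀ j, 0 < μ2 j) (hμ2sum : ∑ j, μ2 j = 1) :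
    ∃ Q : Fin n → Fin m → ℝ,
      IsCoupling μ1 μ2 Q ∧
      (∀ Q', IsCoupling μ1 μ2 Q' →
        entropicOTObjective ε S Q' ≤ entropicOTObjective ε S Q) ∧
      (∀ Q', IsCoupling μ1 μ2 Q' →
        entropicOTObjective ε S Q' = entropicOTObjective ε S Q → Q' = Q) ∧
      (∀ i j, 0 < Q i j) ∧
      ∃ (κ1 : Fin n → ℝ) (κ2 : Fin m → ℝ),
        (∀ i, 0 < κ1 i) ∧ (∀ j, 0 < κ2 j) ∧
        ∀ i j, Q i j = κ1 i * Real.exp (S i j / ε) * κ2 j := by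
  obtain ⟨Q, hQ, hmax⟩ := exists_max ε S μ1 hμ1 hμ1sum μ2 hμ2 hμ2sum
  have hpos := max_pos hε S hμ1 hμ2 hQ hmax
  exact ⟨Q, hQ, hmax, max_unique hε S hQ hmax, hpos,
    max_factor hn hm hε S hQ hpos hmax⟩
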